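/- Let A be an m×n real matrix, b ∈ ℝᵐ, x ∈ ℝⁿ, and let x* ∈ ℝⁿ satisfy A x* ≤ b componentwise. Then ‖(Ax − b)₊‖² ≤ ⟨Aᵀ(Ax − b)₊, x − x*⟩, where (v)₊ denotes the componentwise positive part of v ∈ ℝᵐ, ⟨·,·⟩ the Euclidean inner product on ℝⁿ, and ‖·‖ the Euclidean norm. (Inequality (eq. xxstarIneq) proved in the paper.) -/

import Mathlib

open Matrix BigOperators

/-- Reinterpret a plain vector as an element of Euclidean space. -/
noncomputable def toEuc {k : ℕ} (v : Fin k → ℝ) : EuclideanSpace ℝ (Fin k) := WithLp.toLp 2 v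

/-- The componentwise positive part `(A x - b)₊` of the residual. -/
noncomputable def posRes {m n : ℕ} (A : Matrix (Fin m) (Fin n) ℝ) (b : Fin m → ℝ)
    (x : EuclideanSpace ℝ (Fin n)) : EuclideanSpace ℝ (Fin m) :=
  WithLp.toLp 2 (fun i => max 0 (A.mulVec x i - b i))

/-- inequality (eq. xxstarIneq) of the paper: if `A x* ≤ b` componentwise,
then `‖(A x - b)₊‖² ≤ ⟨Aᵀ (A x - b)₊, x - x*⟩`. -/
theorem posRes_sq_le_inner {m n : ℕ} (A : Matrix (Fin m) (Fin n) ℝ) (b : Fin m → ℝ)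
    (x xstar : EuclideanSpace ℝ (Fin n)) (hfeas : ∀ i, A.mulVec xstar i ≤ b i) :
    ‖posRes A b x‖ ^ 2 ≤
      (inner ℝ (toEuc (Aᵀ.mulVec (posRes A b x))) (x - xstar) : ℝ) := by
  set p : EuclideanSpace ℝ (Fin m) := posRes A b x with hp
  have hinner : (inner ℝ (toEuc (Aᵀ.mulVec p)) (x - xstar) : ℝ)
      = ∑ i, p i * A.mulVec (fun j => x j - xstar j) i := by
    rw [PiLp.inner_apply]
    have : ∀ j, Aᵀ.mulVec p j = ∑ i, p i * A i j := by
      intro j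
      simp [Matrix.mulVec, dotProduct, Matrix.transpose_apply, mul_comm]
    simp only [toEuc, RCLike.inner_apply, starRingEnd_apply, star_trivial, this,
      Matrix.mulVec, dotProduct, Finset.sum_mul, Finset.mul_sum]
    rw [Finset.sum_comm]
    congr 1; ext i; congr 1; ext j
    have : (x - xstar) j = x j - xstar j := rfl
    rw [this]; simp [Matrix.transpose_apply]; ring
  have hnorm : ‖p‖ ^ 2 = ∑ i, p i * p i := by
    rw [← real_inner_self_eq_norm_sq, PiLp.inner_apply]
    simp [sq]
  rw [hinner, hnorm]
  apply Finset.sum_le_sum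
  intro i _
  have hlin : A.mulVec (fun j => x j - xstar j) i = A.mulVec x i - A.mulVec xstar i := by
    simp [Matrix.mulVec, dotProduct, mul_sub, Finset.sum_sub_distrib]
  rw [hlin]
  have hpnn : 0 ≤ p i := by simp [hp, posRes]
  rcases le_or_gt (A.mulVec x i) (b i) with h | h
  · have : p i = 0 := by simp [hp, posRes, sub_nonpos.mpr h]
    simp [this]
  · have hpi : p i = A.mulVec x i - b i := by
      simp [hp, posRes, max_eq_right (le_of_lt (sub_pos.mpr h))]
    calc p i * p i = p i * (A.mulVec x i - b i) := by rw [← hpi]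
      _ ≤ p i * (A.mulVec x i - A.mulVec xstar i) := by
          apply mul_le_mul_of_nonneg_left _ hpnn
          linarith [hfeas i]
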